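/- Let X be a standardized k-Dirac mixture with k > 1. Then for every s ∈ ℝ, Var|X − s| = 1 + s² − (E|X − s|)². Moreover, for every g ∈ {1,…,k−1} and every s ∈ [μ_g, μ_{g+1}], Var|X − s| = 4 η_g (1 − η_g) s² + 4 (2η_g − 1) α_g s + 1 − 4 α_g², which also equals 1 − 4 η_g (1 − η_g) (α_g/η_g − s)(α_g/(1 − η_g) + s). -/

import Mathlib

open MeasureTheory ProbabilityTheory

theorem stmt_4 (k : ℕ) (hk : 1 < k) (ε μ : ℕ → ℝ)
    (hε : ∀ i ∈ Finset.Icc 1 k, 0 < ε i)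
    (hsum : ∑ i ∈ Finset.Icc 1 k, ε i = 1)
    (hord : ∀ i ∈ Finset.Ico 1 k, μ i < μ (i + 1))
    (P : Measure ℝ)
    (hP : P = ∑ i ∈ Finset.Icc 1 k, ENNReal.ofReal (ε i) • Measure.dirac (μ i))
    (hmean : ∫ x, x ∂P = 0) (hm2 : ∫ x, x ^ 2 ∂P = 1) :
    (∀ s : ℝ, variance (fun x => |x - s|) P = 1 + s ^ 2 - (∫ x, |x - s| ∂P) ^ 2) ∧
    ∀ g ∈ Finset.Ico 1 k, ∀ s ∈ Set.Icc (μ g) (μ (g + 1)),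
      variance (fun x => |x - s|) P =
        4 * (∑ i ∈ Finset.Icc 1 g, ε i) * (1 - ∑ i ∈ Finset.Icc 1 g, ε i) * s ^ 2
          + 4 * (2 * (∑ i ∈ Finset.Icc 1 g, ε i) - 1) * (∑ i ∈ Finset.Icc 1 g, ε i * μ i) * s
          + 1 - 4 * (∑ i ∈ Finset.Icc 1 g, ε i * μ i) ^ 2 ∧
      variance (fun x => |x - s|) P =
        1 - 4 * (∑ i ∈ Finset.Icc 1 g, ε i) * (1 - ∑ i ∈ Finset.Icc 1 g, ε i) *
          ((∑ i ∈ Finset.Icc 1 g, ε i * μ i) / (∑ i ∈ Finset.Icc 1 g, ε i) - s) *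
          ((∑ i ∈ Finset.Icc 1 g, ε i * μ i) / (1 - ∑ i ∈ Finset.Icc 1 g, ε i) + s) := by
  -- integrals against P are finite sums
  have hint : ∀ f : ℝ → ℝ, Measurable f →
      ∫ x, f x ∂P = ∑ i ∈ Finset.Icc 1 k, ε i * f (μ i) := by
    intro f hf
    rw [hP, integral_finset_sum_measure (fun i hi => ?_)]
    · refine Finset.sum_congr rfl fun i hi => ?_
      rw [integral_smul_measure, integral_dirac, ENNReal.toReal_ofReal (hε i hi).le,
        smul_eq_mul]
    · refine Integrable.smul_measure ⟨hf.aestronglyMeasurable, ?_⟩ ENNReal.ofReal_ne_top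
      unfold HasFiniteIntegral
      rw [lintegral_dirac]
      exact ENNReal.coe_lt_top
  have hmem : ∀ f : ℝ → ℝ, Measurable f → MemLp f 2 P := by
    intro f hf
    refine ⟨hf.aestronglyMeasurable, ?_⟩
    rw [hP, eLpNorm_eq_lintegral_rpow_enorm_toReal two_ne_zero ENNReal.ofNat_ne_top]
    refine ENNReal.rpow_lt_top_of_nonneg (by positivity) ?_
    rw [lintegral_finset_sum_measure]
    refine (ENNReal.sum_lt_top.2 fun i hi => ?_).ne
    rw [lintegral_smul_measure, lintegral_dirac]
    exact ENNReal.mul_lt_top ENNReal.ofReal_lt_top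
      (ENNReal.rpow_lt_top_of_nonneg (by norm_num) enorm_ne_top)
  have hprob : IsProbabilityMeasure P := by
    constructor
    rw [hP]
    simp only [Measure.finset_sum_apply, Measure.smul_apply, MeasureTheory.Measure.dirac_apply,
      MeasurableSet.univ, Set.mem_univ, Set.indicator_of_mem, Pi.one_apply, smul_eq_mul, mul_one]
    rw [← ENNReal.ofReal_sum_of_nonneg (fun i hi => (hε i hi).le), hsum, ENNReal.ofReal_one]
  have hA : ∑ i ∈ Finset.Icc 1 k, ε i * μ i = 0 := by
    have h := hint (fun x => x) measurable_id
    rw [h] at hmean; exact hmean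
  have hB : ∑ i ∈ Finset.Icc 1 k, ε i * μ i ^ 2 = 1 := by
    have h := hint (fun x => x ^ 2) (measurable_id.pow_const 2)
    rw [h] at hm2; exact hm2
  -- first part
  have habs : ∀ s : ℝ, Measurable fun x : ℝ => |x - s| := fun s => by fun_prop
  have hvar : ∀ s : ℝ,
      variance (fun x => |x - s|) P = 1 + s ^ 2 - (∫ x, |x - s| ∂P) ^ 2 := by
    intro s
    rw [variance_eq_sub (hmem _ (habs s))]
    have h2 : (fun x : ℝ => |x - s|) ^ 2 = fun x : ℝ => (x - s) ^ 2 := by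
      funext x; simp [sq_abs]
    rw [h2]
    have := hint (fun x => (x - s) ^ 2) (by fun_prop)
    have hval : ∫ x, (x - s) ^ 2 ∂P = 1 + s ^ 2 := by
      rw [this]
      have : ∑ i ∈ Finset.Icc 1 k, ε i * (μ i - s) ^ 2 =
          ∑ i ∈ Finset.Icc 1 k, (ε i * μ i ^ 2 - 2 * s * (ε i * μ i) + s ^ 2 * ε i) :=
        Finset.sum_congr rfl fun i _ => by ring
      rw [this, Finset.sum_add_distrib, Finset.sum_sub_distrib, ← Finset.mul_sum,
        ← Finset.mul_sum, hA, hB, hsum]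
      ring
    rw [hval]
  refine ⟨hvar, ?_⟩
  -- second part
  intro g hg s hs
  rw [Finset.mem_Ico] at hg
  obtain ⟨hg1, hgk⟩ := hg
  -- monotonicity
  have hmono : ∀ a b : ℕ, 1 ≤ a → a ≤ b → b ≤ k → μ a ≤ μ b := by
    intro a b ha hab hbk
    obtain ⟨n, rfl⟩ := Nat.exists_eq_add_of_le hab
    clear hab
    induction n with
    | zero => simp
    | succ m ih =>
      have h1 : μ (a + m) ≤ μ (a + m + 1) :=
        (hord (a + m) (Finset.mem_Ico.2 ⟨by omega, by omega⟩)).le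
      have h2 := ih (by omega)
      calc μ a ≤ μ (a + m) := h2
        _ ≤ μ (a + (m + 1)) := by rw [show a + (m + 1) = a + m + 1 by ring]; exact h1
  -- split of sums
  have hsplit : ∀ f : ℕ → ℝ, ∑ i ∈ Finset.Icc 1 k, f i =
      ∑ i ∈ Finset.Icc 1 g, f i + ∑ i ∈ Finset.Icc (g + 1) k, f i := by
    intro f
    rw [show Finset.Icc 1 k = Finset.Icc 1 g ∪ Finset.Icc (g + 1) k by
      ext i; simp only [Finset.mem_union, Finset.mem_Icc]; omega]
    exact Finset.sum_union (by simp only [Finset.disjoint_left, Finset.mem_Icc]; omega)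
  set η := ∑ i ∈ Finset.Icc 1 g, ε i with hη
  set α := ∑ i ∈ Finset.Icc 1 g, ε i * μ i with hα
  have hη1 : ∑ i ∈ Finset.Icc (g + 1) k, ε i = 1 - η := by
    have := hsplit ε; rw [hsum] at this; linarith
  have hα1 : ∑ i ∈ Finset.Icc (g + 1) k, ε i * μ i = -α := by
    have := hsplit (fun i => ε i * μ i); rw [hA] at this; linarith
  have hηpos : 0 < η :=
    Finset.sum_pos (fun i hi => hε i (Finset.mem_Icc.2 ⟨(Finset.mem_Icc.1 hi).1,
      le_trans (Finset.mem_Icc.1 hi).2 (by omega)⟩)) ⟨1, Finset.mem_Icc.2 ⟨le_refl _, hg1⟩⟩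
  have hηlt : η < 1 := by
    have : 0 < ∑ i ∈ Finset.Icc (g + 1) k, ε i :=
      Finset.sum_pos (fun i hi => by
        rw [Finset.mem_Icc] at hi
        exact hε i (Finset.mem_Icc.2 ⟨by omega, hi.2⟩))
        ⟨g + 1, Finset.mem_Icc.2 ⟨le_refl _, by omega⟩⟩
    linarith [hη1 ▸ this]
  -- value of E|X - s|
  have hE : ∫ x, |x - s| ∂P = (2 * η - 1) * s - 2 * α := by
    rw [hint _ (habs s), hsplit (fun i => ε i * |μ i - s|)]
    have h1 : ∑ i ∈ Finset.Icc 1 g, ε i * |μ i - s| =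
        ∑ i ∈ Finset.Icc 1 g, (ε i * s - ε i * μ i) := by
      refine Finset.sum_congr rfl fun i hi => ?_
      rw [Finset.mem_Icc] at hi
      rw [abs_of_nonpos (by linarith [hmono i g hi.1 hi.2 (by omega), hs.1])]
      ring
    have h2 : ∑ i ∈ Finset.Icc (g + 1) k, ε i * |μ i - s| =
        ∑ i ∈ Finset.Icc (g + 1) k, (ε i * μ i - ε i * s) := by
      refine Finset.sum_congr rfl fun i hi => ?_
      rw [Finset.mem_Icc] at hi
      rw [abs_of_nonneg (by linarith [hmono (g + 1) i (by omega) hi.1 hi.2, hs.2])]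
      ring
    rw [h1, h2, Finset.sum_sub_distrib, Finset.sum_sub_distrib, ← Finset.sum_mul,
      ← Finset.sum_mul, ← hη, ← hα, hη1, hα1]
    ring
  have key : variance (fun x => |x - s|) P =
      4 * η * (1 - η) * s ^ 2 + 4 * (2 * η - 1) * α * s + 1 - 4 * α ^ 2 := by
    rw [hvar s, hE]; ring
  refine ⟨key, ?_⟩
  rw [key]
  have h1 : η ≠ 0 := ne_of_gt hηpos
  have h2 : 1 - η ≠ 0 := by linarith
  field_simp
  ring
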